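/- Let A be a Noetherian local ring with maximal ideal m that is m-adically complete. If M is an A-module that is m-adically separated (i.e. the intersection of the submodules m^n M over all n is zero) and M/mM is a finite-dimensional vector space over A/m, then M is a finitely generated A-module. -/

import Mathlib

open Submodule IsLocalRing


/-- Let `A` be a Noetherian local ring with maximal ideal `m` that is
`m`-adically complete.  If `M` is an `m`-adically separated `A`-module (the intersection of
the submodules `m^n • M` is zero) whose reduction `M/mM` is a finite-dimensional vector
space over the residue field `A/m`, then `M` is a finitely generated `A`-module. -/
theorem complete_nakayama
    (A : Type*) [CommRing A] [IsNoetherianRing A] [IsLocalRing A]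
    [IsAdicComplete (IsLocalRing.maximalIdeal A) A]
    (M : Type*) [AddCommGroup M] [Module A M]
    (hsep : (⨅ n : ℕ, (IsLocalRing.maximalIdeal A ^ n) • (⊤ : Submodule A M)) = ⊥)
    (hfin : Module.Finite (A ⧸ IsLocalRing.maximalIdeal A)
      (M ⧸ (IsLocalRing.maximalIdeal A • (⊤ : Submodule A M)))) :
    Module.Finite A M := by
  set m := IsLocalRing.maximalIdeal A with hm
  set Q := M ⧸ (m • (⊤ : Submodule A M))
  haveI : Module.Finite A Q := Module.Finite.trans (A ⧸ m) Q
  obtain ⟨k, v, hv⟩ := Module.Finite.exists_fin (R := A) (M := Q)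
  have hlift : ∀ j, ∃ x : M, Submodule.mkQ (m • (⊤ : Submodule A M)) x = v j := fun j =>
    Submodule.Quotient.mk_surjective _ (v j)
  choose x hx using hlift
  set f : (Fin k → A) →ₗ[A] M := Fintype.linearCombination A x with hf
  have hrange : LinearMap.range f = span A (Set.range x) := Fintype.range_linearCombination (R := A) (v := x)
  set N : Submodule A M := span A (Set.range x) with hN
  have hsup : m • (⊤ : Submodule A M) ⊔ N = ⊤ := by
    rw [← Submodule.map_mkQ_eq_top, hN, Submodule.map_span, ← Set.range_comp]
    have h1 : (Submodule.mkQ (m • (⊤ : Submodule A M))) ∘ x = v := funext hx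
    rw [h1, hv]
  have hkey : ∀ n : ℕ, (m ^ n • (⊤ : Submodule A M)) =
      m ^ n • N ⊔ m ^ (n+1) • (⊤ : Submodule A M) := by
    intro n
    conv_lhs => rw [← hsup]
    rw [Submodule.smul_sup, smul_smul, ← pow_succ, sup_comm]
  -- components of elements of I • ⊤ in a pi type lie in I
  have hcomp : ∀ (I : Ideal A) (b : Fin k → A),
      b ∈ I • (⊤ : Submodule A (Fin k → A)) → ∀ i, b i ∈ I := by
    intro I b hb i
    refine Submodule.smul_induction_on hb (fun r hr z _ => ?_) (fun z w hz hw => ?_)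
    · simpa using Ideal.mul_mem_right _ _ hr
    · simpa using add_mem hz hw
  -- it suffices to show f is surjective
  suffices hsurj : Function.Surjective f by
    exact Module.Finite.of_surjective f hsurj
  intro y
  -- step lemma
  have step : ∀ (n : ℕ) (c : Fin k → A), y - f c ∈ m ^ n • (⊤ : Submodule A M) →
      ∃ d : Fin k → A, (∀ i, d i ∈ m ^ n) ∧
        y - f (c + d) ∈ m ^ (n+1) • (⊤ : Submodule A M) := by
    intro n c hc
    rw [hkey n] at hc
    obtain ⟨u, hu, w, hw, heq⟩ := Submodule.mem_sup.mp hc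
    have h2 : m ^ n • N = Submodule.map f (m ^ n • ⊤) := by
      rw [Submodule.map_smul'', Submodule.map_top, hrange]
    rw [h2] at hu
    obtain ⟨b, hb, hbu⟩ := hu
    refine ⟨b, hcomp _ _ hb, ?_⟩
    have : y - f (c + b) = w := by
      have h3 : u = y - f c - w := by rw [← heq]; abel
      rw [map_add, hbu, h3]; abel
    rwa [this]
  choose! d hd hP using step
  -- the sequence of approximations
  let c : ∀ n : ℕ, {cc : Fin k → A // y - f cc ∈ m ^ n • (⊤ : Submodule A M)} := fun n =>
    Nat.rec ⟨0, by simp⟩ (fun n p => ⟨p.1 + d n p.1, hP n p.1 p.2⟩) n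
  have hcsucc : ∀ n, (c (n+1)).1 = (c n).1 + d n (c n).1 := fun n => rfl
  have hdmem : ∀ n i, d n (c n).1 i ∈ m ^ n := fun n i => hd n (c n).1 (c n).2 i
  -- Cauchy in each coordinate
  have hcauchy : ∀ i : Fin k, ∀ {p q : ℕ}, p ≤ q →
      (c p).1 i ≡ (c q).1 i [SMOD (m ^ p • ⊤ : Submodule A A)] := by
    intro i p q hpq
    rw [SModEq.sub_mem]
    have : (m ^ p • ⊤ : Submodule A A) = m ^ p := by
      rw [smul_eq_mul, Ideal.mul_top]
    rw [this]
    induction q, hpq using Nat.le_induction with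
    | base => simp
    | succ q hpq ih =>
      have : (c p).1 i - (c (q+1)).1 i = ((c p).1 i - (c q).1 i) - d q (c q).1 i := by
        rw [hcsucc q]; simp; ring
      rw [this]
      exact sub_mem ih (Ideal.pow_le_pow_right hpq (hdmem q i))
  -- take limits coordinatewise
  have hlim : ∀ i : Fin k, ∃ Li : A, ∀ n, (c n).1 i - Li ∈ m ^ n := by
    intro i
    obtain ⟨Li, hLi⟩ := IsPrecomplete.prec (IsAdicComplete.toIsPrecomplete (I := m) (M := A))
      (f := fun n => (c n).1 i) (fun {p q} h => hcauchy i h)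
    refine ⟨Li, fun n => ?_⟩
    have := (SModEq.sub_mem.mp (hLi n))
    rwa [smul_eq_mul, Ideal.mul_top] at this
  choose L hL using hlim
  refine ⟨L, ?_⟩
  -- show f L = y using separatedness
  have hmem : ∀ n : ℕ, y - f L ∈ m ^ n • (⊤ : Submodule A M) := by
    intro n
    have h1 : y - f L = (y - f (c n).1) + (f (c n).1 - f L) := by abel
    rw [h1]
    refine add_mem (c n).2 ?_
    rw [← map_sub]
    have h2 : f ((c n).1 - L) = ∑ i, ((c n).1 i - L i) • x i := by
      simp [hf, Fintype.linearCombination_apply, sub_smul]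
    rw [h2]
    exact sum_mem fun i _ => Submodule.smul_mem_smul (hL i n) trivial
  have : y - f L ∈ (⊥ : Submodule A M) := by
    rw [← hsep]; exact (Submodule.mem_iInf _).mpr hmem
  exact (sub_eq_zero.mp ((Submodule.mem_bot A).mp this)).symm
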